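/- Dynamics on the separatrix branch W₁ (trajectories through the focus (c, 0)): let ξ₀ > 0, let φ₀ = 2 arctan ξ₀ ∈ (0, π), and let θ₀ ∈ (π/2, π) be the unique angle with tan θ₀ = −b(1 + ξ₀²)/(2 c ξ₀). Then for every integer n ≥ 0, the n-th iterate of the static billiard map satisfies B_sⁿ(φ₀, θ₀) = (φ_n, θ_n) (mod π), where φ_n = 2 arctan(λⁿ ξ₀) and θ_n ∈ (π/2, π) is the unique angle with tan θ_n = −b(1 + λ^{2n} ξ₀²)/(2 c λⁿ ξ₀). -/

import Mathlib

open Real Filter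

set_option maxHeartbeats 2000000

private lemma cos_int_mul_pi_ne (k : ℤ) : Real.cos (k * Real.pi) ≠ 0 := by
  intro hc
  have h2 := Real.sin_sq_add_cos_sq ((k : ℝ) * Real.pi)
  rw [Real.sin_int_mul_pi, hc] at h2
  norm_num at h2

private lemma cos_ne_add_int {y : ℝ} (k : ℤ) (h : Real.cos y ≠ 0) :
    Real.cos (y + k * Real.pi) ≠ 0 := by
  rw [Real.cos_add, Real.sin_int_mul_pi, mul_zero, sub_zero]
  exact mul_ne_zero h (cos_int_mul_pi_ne k)

private lemma sin_ne_add_int {y : ℝ} (k : ℤ) (h : Real.sin y ≠ 0) :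
    Real.sin (y + k * Real.pi) ≠ 0 := by
  rw [Real.sin_add, Real.sin_int_mul_pi, mul_zero, add_zero]
  exact mul_ne_zero h (cos_int_mul_pi_ne k)

private lemma cos_two_arctan (x : ℝ) :
    Real.cos (2 * Real.arctan x) = (1 - x ^ 2) / (1 + x ^ 2) := by
  rw [Real.cos_two_mul, Real.cos_sq_arctan]
  have h : (1 : ℝ) + x ^ 2 ≠ 0 := by positivity
  field_simp
  ring

private lemma sin_two_arctan (x : ℝ) :
    Real.sin (2 * Real.arctan x) = 2 * x / (1 + x ^ 2) := by
  rw [Real.sin_two_mul, Real.sin_arctan, Real.cos_arctan]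
  have h : (0: ℝ) < 1 + x ^ 2 := by positivity
  have hs : Real.sqrt (1 + x ^ 2) * Real.sqrt (1 + x ^ 2) = 1 + x ^ 2 :=
    Real.mul_self_sqrt h.le
  have hs0 : Real.sqrt (1 + x ^ 2) ≠ 0 := by positivity
  field_simp
  rw [Real.sq_sqrt h.le]

private lemma tan_two_arctan (x : ℝ) :
    Real.tan (2 * Real.arctan x) = 2 * x / (1 - x ^ 2) := by
  rw [Real.tan_two_mul, Real.tan_arctan]

private lemma one_sub_sq_ne {x : ℝ} (h0 : 0 < x) (h1 : x ≠ 1) : 1 - x ^ 2 ≠ 0 := by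
  intro h
  have h2 : (x - 1) * (x + 1) = 0 := by nlinarith
  rcases mul_eq_zero.1 h2 with h3 | h3
  · exact h1 (by linarith)
  · linarith

private lemma arctan_pos' {x : ℝ} (h : 0 < x) : 0 < Real.arctan x := by
  have := Real.arctan_strictMono (show (0:ℝ) < x from h)
  simpa [Real.arctan_zero] using this

private lemma habs (A B C D W1 W2 : ℝ) (h : A * B + C * D = 0) :
    A / W1 * (B / W2) + C / W1 * (D / W2) = 0 := by
  rw [div_mul_div_comm, div_mul_div_comm, ← add_div]
  exact div_eq_zero_iff.2 (Or.inl h)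

private lemma sin_arctan_add (s t : ℝ) : Real.sin (Real.arctan s + Real.arctan t)
    = (s + t) / (Real.sqrt (1 + s ^ 2) * Real.sqrt (1 + t ^ 2)) := by
  have h1 : Real.sqrt (1 + s ^ 2) ≠ 0 := by positivity
  have h2 : Real.sqrt (1 + t ^ 2) ≠ 0 := by positivity
  rw [Real.sin_add, Real.sin_arctan, Real.cos_arctan, Real.sin_arctan, Real.cos_arctan]
  field_simp

private lemma cos_arctan_add (s t : ℝ) : Real.cos (Real.arctan s + Real.arctan t)
    = (1 - s * t) / (Real.sqrt (1 + s ^ 2) * Real.sqrt (1 + t ^ 2)) := by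
  have h1 : Real.sqrt (1 + s ^ 2) ≠ 0 := by positivity
  have h2 : Real.sqrt (1 + t ^ 2) ≠ 0 := by positivity
  rw [Real.cos_add, Real.sin_arctan, Real.cos_arctan, Real.sin_arctan, Real.cos_arctan]
  field_simp

private lemma sin_arctan_sub (s t : ℝ) : Real.sin (Real.arctan s - Real.arctan t)
    = (s - t) / (Real.sqrt (1 + s ^ 2) * Real.sqrt (1 + t ^ 2)) := by
  have h1 : Real.sqrt (1 + s ^ 2) ≠ 0 := by positivity
  have h2 : Real.sqrt (1 + t ^ 2) ≠ 0 := by positivity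
  rw [Real.sin_sub, Real.sin_arctan, Real.cos_arctan, Real.sin_arctan, Real.cos_arctan]
  field_simp

private lemma cos_arctan_sub (s t : ℝ) : Real.cos (Real.arctan s - Real.arctan t)
    = (1 + s * t) / (Real.sqrt (1 + s ^ 2) * Real.sqrt (1 + t ^ 2)) := by
  have h1 : Real.sqrt (1 + s ^ 2) ≠ 0 := by positivity
  have h2 : Real.sqrt (1 + t ^ 2) ≠ 0 := by positivity
  rw [Real.cos_sub, Real.sin_arctan, Real.cos_arctan, Real.sin_arctan, Real.cos_arctan]
  field_simp

private lemma step_generic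
    (a b c lam : ℝ) (hb : 0 < b) (hc0 : 0 < c) (hca : c < a)
    (hb2 : b ^ 2 = a ^ 2 - c ^ 2) (hlam : lam = (a + c) / (a - c))
    (Bs : ℝ × ℝ → ℝ × ℝ)
    (hBs1 : ∀ φ θ : ℝ, Real.cos φ ≠ 0 → Real.cos θ ≠ 0 →
      b - a * Real.tan φ * Real.tan θ ≠ 0 →
      ∃ k : ℤ, (Bs (φ, θ)).1 = -φ + 2 * Real.arctan (b * (a * Real.tan φ + b * Real.tan θ) /
        (a * (b - a * Real.tan φ * Real.tan θ))) + k * Real.pi)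
    (hBs2 : ∀ φ θ : ℝ, Real.cos φ ≠ 0 → Real.cos θ ≠ 0 →
      b - a * Real.tan φ * Real.tan θ ≠ 0 → Real.sin φ ≠ 0 →
      Real.cos ((Bs (φ, θ)).1) ≠ 0 → Real.sin ((Bs (φ, θ)).1) ≠ 0 →
      ∃ k : ℤ, (Bs (φ, θ)).2 = -θ + Real.arctan (b / (a * Real.tan φ))
        - Real.arctan (b / (a * Real.tan ((Bs (φ, θ)).1))) + k * Real.pi)
    (x : ℝ) (hx : 0 < x) (hx1 : x ≠ 1) (hlx1 : lam * x ≠ 1) (k l : ℤ) :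
    ∃ k' l' : ℤ,
      Bs (2 * Real.arctan x + k * Real.pi,
          Real.arctan (-(b * (1 + x ^ 2)) / (2 * c * x)) + Real.pi + l * Real.pi)
      = (2 * Real.arctan (lam * x) + k' * Real.pi,
         Real.arctan (-(b * (1 + (lam * x) ^ 2)) / (2 * c * (lam * x))) + Real.pi
           + l' * Real.pi) := by
  have ha : 0 < a := hc0.trans hca
  have hq : 0 < a - c := sub_pos.2 hca
  have hp : 0 < a + c := by linarith
  have hlam0 : 0 < lam := hlam ▸ div_pos hp hq
  have hlx : 0 < lam * x := mul_pos hlam0 hx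
  have hxne : x ≠ 0 := ne_of_gt hx
  have h1mx : 1 - x ^ 2 ≠ 0 := one_sub_sq_ne hx hx1
  have h1mlx : 1 - (lam * x) ^ 2 ≠ 0 := one_sub_sq_ne hlx hlx1
  set u : ℝ := -(b * (1 + x ^ 2)) / (2 * c * x) with hu
  set v : ℝ := b * (1 - x ^ 2) / (2 * a * x) with hv
  set u₁ : ℝ := -(b * (1 + (lam * x) ^ 2)) / (2 * c * (lam * x)) with hu1
  set v₁ : ℝ := b * (1 - (lam * x) ^ 2) / (2 * a * (lam * x)) with hv1
  set φv : ℝ := 2 * Real.arctan x + k * Real.pi with hφv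
  set θv : ℝ := Real.arctan u + Real.pi + l * Real.pi with hθv
  have hθv' : θv = Real.arctan u + (l + 1 : ℤ) * Real.pi := by push_cast; ring
  -- tangents
  have htanφ : Real.tan φv = 2 * x / (1 - x ^ 2) := by
    rw [hφv, Real.tan_add_int_mul_pi, tan_two_arctan]
  have htanθ : Real.tan θv = u := by
    rw [hθv', Real.tan_add_int_mul_pi, Real.tan_arctan]
  -- nonvanishing at the base point
  have hcosφ : Real.cos φv ≠ 0 := by
    apply cos_ne_add_int
    rw [cos_two_arctan]
    exact div_ne_zero h1mx (by positivity)
  have hsinφ : Real.sin φv ≠ 0 := by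
    apply sin_ne_add_int
    rw [sin_two_arctan]
    positivity
  have hcosθ : Real.cos θv ≠ 0 := by
    rw [hθv']
    apply cos_ne_add_int
    rw [Real.cos_arctan]
    positivity
  have heq : b - a * (2 * x / (1 - x ^ 2)) * (-(b * (1 + x ^ 2)) / (2 * c * x))
      = b * ((a + c) + (a - c) * x ^ 2) / (c * (1 - x ^ 2)) := by
    field_simp
    ring
  have hpq : (0:ℝ) < (a + c) + (a - c) * x ^ 2 := by positivity
  have hden : b - a * Real.tan φv * Real.tan θv ≠ 0 := by
    rw [htanφ, htanθ, hu, heq]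
    exact div_ne_zero (by positivity) (mul_ne_zero (ne_of_gt hc0) h1mx)
  -- step 1 : first coordinate
  obtain ⟨k₁, hk₁⟩ := hBs1 φv θv hcosφ hcosθ hden
  rw [htanφ, htanθ, hu] at hk₁
  have hTR : b * (a * (2 * x / (1 - x ^ 2)) + b * (-(b * (1 + x ^ 2)) / (2 * c * x))) /
      (a * (b - a * (2 * x / (1 - x ^ 2)) * (-(b * (1 + x ^ 2)) / (2 * c * x))))
      = (lam * x ^ 2 - 1) / (x + lam * x) := by
    have hdenne : a * (b - a * (2 * x / (1 - x ^ 2)) * (-(b * (1 + x ^ 2)) / (2 * c * x))) ≠ 0 := by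
      rw [heq]
      exact mul_ne_zero (ne_of_gt ha)
        (div_ne_zero (by positivity) (mul_ne_zero (ne_of_gt hc0) h1mx))
    have hxlx' : x + lam * x ≠ 0 := by positivity
    rw [div_eq_div_iff hdenne hxlx', hlam]
    field_simp
    ring_nf
    linear_combination (2*a*(x^4-1) : ℝ) * hb2
  have hs1 : (0:ℝ) < Real.sqrt (1 + x ^ 2) := Real.sqrt_pos.2 (by positivity)
  have hs2 : (0:ℝ) < Real.sqrt (1 + (lam * x) ^ 2) := Real.sqrt_pos.2 (by positivity)
  have hcos_s : Real.cos (Real.arctan x + Real.arctan (lam * x))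
      = (1 - x * (lam * x)) / (Real.sqrt (1 + x ^ 2) * Real.sqrt (1 + (lam * x) ^ 2)) := by
    rw [cos_arctan_add]
  have hsin_s : Real.sin (Real.arctan x + Real.arctan (lam * x))
      = (x + lam * x) / (Real.sqrt (1 + x ^ 2) * Real.sqrt (1 + (lam * x) ^ 2)) := by
    rw [sin_arctan_add]
  have hxlx : (0:ℝ) < x + lam * x := by positivity
  have hR : Real.tan (Real.arctan x + Real.arctan (lam * x) - Real.pi / 2)
      = (lam * x ^ 2 - 1) / (x + lam * x) := by
    rw [Real.tan_eq_sin_div_cos, Real.sin_sub_pi_div_two, Real.cos_sub_pi_div_two,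
      hcos_s, hsin_s]
    field_simp
    ring
  have harc : Real.arctan ((lam * x ^ 2 - 1) / (x + lam * x))
      = Real.arctan x + Real.arctan (lam * x) - Real.pi / 2 := by
    rw [← hR]
    apply Real.arctan_tan
    · have h1 : 0 < Real.arctan x := arctan_pos' hx
      have h2 : 0 < Real.arctan (lam * x) := arctan_pos' hlx
      linarith
    · have h1 : Real.arctan x < Real.pi / 2 := Real.arctan_lt_pi_div_two x
      have h2 : Real.arctan (lam * x) < Real.pi / 2 := Real.arctan_lt_pi_div_two (lam * x)
      linarith
  rw [hTR, harc] at hk₁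
  have hB1 : (Bs (φv, θv)).1 = 2 * Real.arctan (lam * x) + ((k₁ - k - 1 : ℤ)) * Real.pi := by
    rw [hk₁, hφv]
    push_cast
    ring
  -- nonvanishing at the image point
  have hcosB1 : Real.cos ((Bs (φv, θv)).1) ≠ 0 := by
    rw [hB1]
    apply cos_ne_add_int
    rw [cos_two_arctan]
    exact div_ne_zero h1mlx (by positivity)
  have hsinB1 : Real.sin ((Bs (φv, θv)).1) ≠ 0 := by
    rw [hB1]
    apply sin_ne_add_int
    rw [sin_two_arctan]
    positivity
  -- step 2 : second coordinate
  obtain ⟨k₂, hk₂⟩ := hBs2 φv θv hcosφ hcosθ hden hsinφ hcosB1 hsinB1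
  have htanB1 : Real.tan ((Bs (φv, θv)).1) = 2 * (lam * x) / (1 - (lam * x) ^ 2) := by
    rw [hB1, Real.tan_add_int_mul_pi, tan_two_arctan]
  have hvv : b / (a * (2 * x / (1 - x ^ 2))) = v := by
    rw [hv]; field_simp
  have hvv1 : b / (a * (2 * (lam * x) / (1 - (lam * x) ^ 2))) = v₁ := by
    rw [hv1]; field_simp
  rw [htanφ, htanB1, hvv, hvv1] at hk₂
  have hnum : (u₁ + v₁) * (1 + u * v) + (1 - u₁ * v₁) * (u - v) = 0 := by
    rw [hu, hv, hu1, hv1, hlam]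
    field_simp
    ring_nf
    linear_combination (b*(-8*a*c^4*x^2 + 8*a*c^4*x^4 + 8*a^2*c^3*x^2 + 8*a^2*c^3*x^4 - 8*a^3*c^2*x^2 + 8*a^3*c^2*x^4 + 8*a^4*c*x^2 + 8*a^4*c*x^4) : ℝ) * hb2
  have hkey : Real.sin ((Real.arctan u₁ + Real.arctan v₁)
      + (Real.arctan u - Real.arctan v)) = 0 := by
    rw [Real.sin_add, sin_arctan_add, cos_arctan_add, sin_arctan_sub, cos_arctan_sub]
    exact habs _ _ _ _ _ _ (by linear_combination hnum)
  obtain ⟨j, hj⟩ := Real.sin_eq_zero_iff.1 hkey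
  refine ⟨k₁ - k - 1, k₂ - l - j - 2, ?_⟩
  have hB2 : (Bs (φv, θv)).2 = Real.arctan u₁ + Real.pi + ((k₂ - l - j - 2 : ℤ)) * Real.pi := by
    rw [hk₂, hθv]
    push_cast at hj ⊢
    linarith
  exact Prod.ext_iff.2 ⟨hB1, hB2⟩

private lemma step_all
    (a b c lam : ℝ) (hb : 0 < b) (hc0 : 0 < c) (hca : c < a)
    (hb2 : b ^ 2 = a ^ 2 - c ^ 2) (hlam : lam = (a + c) / (a - c))
    (Bs : ℝ × ℝ → ℝ × ℝ) (hcont : Continuous Bs)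
    (hBs1 : ∀ φ θ : ℝ, Real.cos φ ≠ 0 → Real.cos θ ≠ 0 →
      b - a * Real.tan φ * Real.tan θ ≠ 0 →
      ∃ k : ℤ, (Bs (φ, θ)).1 = -φ + 2 * Real.arctan (b * (a * Real.tan φ + b * Real.tan θ) /
        (a * (b - a * Real.tan φ * Real.tan θ))) + k * Real.pi)
    (hBs2 : ∀ φ θ : ℝ, Real.cos φ ≠ 0 → Real.cos θ ≠ 0 →
      b - a * Real.tan φ * Real.tan θ ≠ 0 → Real.sin φ ≠ 0 →
      Real.cos ((Bs (φ, θ)).1) ≠ 0 → Real.sin ((Bs (φ, θ)).1) ≠ 0 →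
      ∃ k : ℤ, (Bs (φ, θ)).2 = -θ + Real.arctan (b / (a * Real.tan φ))
        - Real.arctan (b / (a * Real.tan ((Bs (φ, θ)).1))) + k * Real.pi)
    (x : ℝ) (hx : 0 < x) (k l : ℤ) :
    ∃ k' l' : ℤ,
      Bs (2 * Real.arctan x + k * Real.pi,
          Real.arctan (-(b * (1 + x ^ 2)) / (2 * c * x)) + Real.pi + l * Real.pi)
      = (2 * Real.arctan (lam * x) + k' * Real.pi,
         Real.arctan (-(b * (1 + (lam * x) ^ 2)) / (2 * c * (lam * x))) + Real.pi
           + l' * Real.pi) := by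
  have ha : 0 < a := hc0.trans hca
  have hq : 0 < a - c := sub_pos.2 hca
  have hp : 0 < a + c := by linarith
  have hlam0 : 0 < lam := hlam ▸ div_pos hp hq
  -- the two test functions
  set f₁ : ℝ → ℝ := fun y => Real.sin ((Bs (2 * Real.arctan y + k * Real.pi,
      Real.arctan (-(b * (1 + y ^ 2)) / (2 * c * y)) + Real.pi + l * Real.pi)).1
      - 2 * Real.arctan (lam * y)) with hf₁def
  set f₂ : ℝ → ℝ := fun y => Real.sin ((Bs (2 * Real.arctan y + k * Real.pi,
      Real.arctan (-(b * (1 + y ^ 2)) / (2 * c * y)) + Real.pi + l * Real.pi)).2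
      - (Real.arctan (-(b * (1 + (lam * y) ^ 2)) / (2 * c * (lam * y))) + Real.pi)) with hf₂def
  have hgen : ∀ y : ℝ, 0 < y → y ≠ 1 → lam * y ≠ 1 → f₁ y = 0 ∧ f₂ y = 0 := by
    intro y hy h1 h2
    obtain ⟨k', l', h⟩ := step_generic a b c lam hb hc0 hca hb2 hlam Bs hBs1 hBs2
      y hy h1 h2 k l
    constructor
    · rw [hf₁def]
      simp only [h]
      have : (2 * Real.arctan (lam * y) + (k' : ℝ) * Real.pi) - 2 * Real.arctan (lam * y)
          = (k' : ℝ) * Real.pi := by ring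
      rw [this]
      exact Real.sin_int_mul_pi k'
    · rw [hf₂def]
      simp only [h]
      have : (Real.arctan (-(b * (1 + (lam * y) ^ 2)) / (2 * c * (lam * y))) + Real.pi
          + (l' : ℝ) * Real.pi)
          - (Real.arctan (-(b * (1 + (lam * y) ^ 2)) / (2 * c * (lam * y))) + Real.pi)
          = (l' : ℝ) * Real.pi := by ring
      rw [this]
      exact Real.sin_int_mul_pi l'
  -- continuity at x
  have hinner1 : ContinuousAt (fun y : ℝ => -(b * (1 + y ^ 2)) / (2 * c * y)) x :=
    ContinuousAt.div (by fun_prop) (by fun_prop) (by positivity)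
  have hinner2 : ContinuousAt (fun y : ℝ => -(b * (1 + (lam * y) ^ 2)) / (2 * c * (lam * y))) x :=
    ContinuousAt.div (by fun_prop) (by fun_prop) (by positivity)
  have harc1 : ContinuousAt (fun y : ℝ =>
      Real.arctan (-(b * (1 + y ^ 2)) / (2 * c * y))) x :=
    Real.continuous_arctan.continuousAt.comp hinner1
  have harc2 : ContinuousAt (fun y : ℝ =>
      Real.arctan (-(b * (1 + (lam * y) ^ 2)) / (2 * c * (lam * y)))) x :=
    Real.continuous_arctan.continuousAt.comp hinner2
  have hpair : ContinuousAt (fun y : ℝ => ((2 * Real.arctan y + k * Real.pi,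
      Real.arctan (-(b * (1 + y ^ 2)) / (2 * c * y)) + Real.pi + l * Real.pi) : ℝ × ℝ)) x :=
    ContinuousAt.prodMk
      (((continuousAt_const.mul Real.continuous_arctan.continuousAt).add continuousAt_const))
      ((harc1.add continuousAt_const).add continuousAt_const)
  have hBg : ContinuousAt (fun y : ℝ => Bs (2 * Real.arctan y + k * Real.pi,
      Real.arctan (-(b * (1 + y ^ 2)) / (2 * c * y)) + Real.pi + l * Real.pi)) x :=
    hcont.continuousAt.comp hpair
  have hcf₁ : ContinuousAt f₁ x := by
    rw [hf₁def]
    exact Real.continuous_sin.continuousAt.comp (ContinuousAt.sub hBg.fst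
      (continuousAt_const.mul (Real.continuous_arctan.continuousAt.comp
        (continuousAt_const.mul continuousAt_id))))
  have hcf₂ : ContinuousAt f₂ x := by
    rw [hf₂def]
    exact Real.continuous_sin.continuousAt.comp
      (ContinuousAt.sub hBg.snd (harc2.add continuousAt_const))
  -- approximating sequence
  have hseq : Filter.Tendsto (fun j : ℕ => x + 1 / ((j : ℝ) + 1)) Filter.atTop (nhds x) := by
    have h0 := tendsto_one_div_add_atTop_nhds_zero_nat (𝕜 := ℝ)
    simpa using tendsto_const_nhds.add h0
  have hgt : ∀ j : ℕ, x < x + 1 / ((j : ℝ) + 1) := fun j =>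
    lt_add_of_pos_right x (by positivity)
  have hev1 : ∀ᶠ j : ℕ in Filter.atTop, x + 1 / ((j : ℝ) + 1) ≠ 1 := by
    rcases le_or_gt 1 x with h | h
    · exact Filter.Eventually.of_forall (fun j => ne_of_gt (lt_of_le_of_lt h (hgt j)))
    · exact (hseq.eventually_lt_const h).mono (fun j hj => ne_of_lt hj)
  have hev2 : ∀ᶠ j : ℕ in Filter.atTop, lam * (x + 1 / ((j : ℝ) + 1)) ≠ 1 := by
    rcases le_or_gt 1 (lam * x) with h | h
    · refine Filter.Eventually.of_forall (fun j => ne_of_gt ?_)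
      calc (1 : ℝ) ≤ lam * x := h
        _ < lam * (x + 1 / ((j : ℝ) + 1)) := mul_lt_mul_of_pos_left (hgt j) hlam0
    · have htend : Filter.Tendsto (fun j : ℕ => lam * (x + 1 / ((j : ℝ) + 1)))
        Filter.atTop (nhds (lam * x)) := tendsto_const_nhds.mul hseq
      exact (htend.eventually_lt_const h).mono (fun j hj => ne_of_lt hj)
  have hevz : ∀ᶠ j : ℕ in Filter.atTop,
      f₁ (x + 1 / ((j : ℝ) + 1)) = 0 ∧ f₂ (x + 1 / ((j : ℝ) + 1)) = 0 := by
    filter_upwards [hev1, hev2] with j h1 h2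
    exact hgen _ (hx.trans (hgt j)) h1 h2
  have h₁0 : f₁ x = 0 := by
    refine tendsto_nhds_unique (hcf₁.tendsto.comp hseq) ?_
    exact Filter.Tendsto.congr' (by filter_upwards [hevz] with j hj; exact hj.1.symm)
      tendsto_const_nhds
  have h₂0 : f₂ x = 0 := by
    refine tendsto_nhds_unique (hcf₂.tendsto.comp hseq) ?_
    exact Filter.Tendsto.congr' (by filter_upwards [hevz] with j hj; exact hj.2.symm)
      tendsto_const_nhds
  rw [hf₁def] at h₁0
  rw [hf₂def] at h₂0
  simp only [] at h₁0 h₂0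
  obtain ⟨k', hk'⟩ := Real.sin_eq_zero_iff.1 h₁0
  obtain ⟨l', hl'⟩ := Real.sin_eq_zero_iff.1 h₂0
  refine ⟨k', l', Prod.ext_iff.2 ⟨by linarith [hk'], by linarith [hl']⟩⟩

/-- dynamics of the static elliptic billiard map `B_s` on the separatrix
branch `W₁` (trajectories through the focus `(c, 0)`).  `Bs` is any (continuous
extension of the) map given, modulo `π`, by the defining formulas of the static
elliptic billiard map.  Starting from `φ₀ = 2 arctan ξ₀` with `ξ₀ > 0` and
`θ₀ ∈ (π/2, π)` the unique angle with `tan θ₀ = −b(1+ξ₀²)/(2cξ₀)`, the `n`-th iterate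
equals, modulo `π`, `(φ_n, θ_n)` with `φ_n = 2 arctan (λⁿ ξ₀)` and `θ_n ∈ (π/2, π)`
the unique angle with `tan θ_n = −b(1+λ^{2n}ξ₀²)/(2cλⁿξ₀)`. -/
theorem separatrix_W1_dynamics
    (a b : ℝ) (hb : 0 < b) (hab : b < a)
    (c lam : ℝ) (hc : c = Real.sqrt (a ^ 2 - b ^ 2)) (hlam : lam = (a + c) / (a - c))
    (Bs : ℝ × ℝ → ℝ × ℝ) (hcont : Continuous Bs)
    (hBs1 : ∀ φ θ : ℝ, Real.cos φ ≠ 0 → Real.cos θ ≠ 0 →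
      b - a * Real.tan φ * Real.tan θ ≠ 0 →
      ∃ k : ℤ, (Bs (φ, θ)).1 = -φ + 2 * Real.arctan (b * (a * Real.tan φ + b * Real.tan θ) /
        (a * (b - a * Real.tan φ * Real.tan θ))) + k * Real.pi)
    (hBs2 : ∀ φ θ : ℝ, Real.cos φ ≠ 0 → Real.cos θ ≠ 0 →
      b - a * Real.tan φ * Real.tan θ ≠ 0 → Real.sin φ ≠ 0 →
      Real.cos ((Bs (φ, θ)).1) ≠ 0 → Real.sin ((Bs (φ, θ)).1) ≠ 0 →
      ∃ k : ℤ, (Bs (φ, θ)).2 = -θ + Real.arctan (b / (a * Real.tan φ))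
        - Real.arctan (b / (a * Real.tan ((Bs (φ, θ)).1))) + k * Real.pi)
    (ξ₀ : ℝ) (hξ₀ : 0 < ξ₀)
    (φ₀ θ₀ : ℝ) (hφ₀ : φ₀ = 2 * Real.arctan ξ₀)
    (hθ₀mem : θ₀ ∈ Set.Ioo (Real.pi / 2) Real.pi)
    (hθ₀ : Real.tan θ₀ = -(b * (1 + ξ₀ ^ 2)) / (2 * c * ξ₀)) :
    ∀ n : ℕ, ∃ θn ∈ Set.Ioo (Real.pi / 2) Real.pi,
      Real.tan θn = -(b * (1 + (lam ^ n * ξ₀) ^ 2)) / (2 * c * (lam ^ n * ξ₀)) ∧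
      ∃ k l : ℤ, Bs^[n] (φ₀, θ₀) =
        (2 * Real.arctan (lam ^ n * ξ₀) + k * Real.pi, θn + l * Real.pi) := by
  have ha : 0 < a := hb.trans hab
  have h1 : 0 < a ^ 2 - b ^ 2 := by nlinarith
  have hc2 : c ^ 2 = a ^ 2 - b ^ 2 := by rw [hc]; exact Real.sq_sqrt h1.le
  have hb2 : b ^ 2 = a ^ 2 - c ^ 2 := by linarith
  have hc0 : 0 < c := by rw [hc]; exact Real.sqrt_pos.2 h1
  have hca : c < a := by nlinarith
  have hlam0 : 0 < lam := hlam ▸ div_pos (by linarith) (by linarith)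
  have hππ := Real.pi_pos
  have key : ∀ n : ℕ, ∃ k l : ℤ, Bs^[n] (φ₀, θ₀) =
      (2 * Real.arctan (lam ^ n * ξ₀) + k * Real.pi,
       Real.arctan (-(b * (1 + (lam ^ n * ξ₀) ^ 2)) / (2 * c * (lam ^ n * ξ₀))) + Real.pi
         + l * Real.pi) := by
    intro n
    induction n with
    | zero =>
      refine ⟨0, 0, ?_⟩
      have hθeq : θ₀ = Real.arctan (-(b * (1 + ξ₀ ^ 2)) / (2 * c * ξ₀)) + Real.pi := by
        have h1' : -(Real.pi / 2) < θ₀ - Real.pi := by have := hθ₀mem.1; linarith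
        have h2' : θ₀ - Real.pi < Real.pi / 2 := by have := hθ₀mem.2; linarith
        have h3 := Real.arctan_tan h1' h2'
        rw [Real.tan_sub_pi, hθ₀] at h3
        linarith
      rw [Function.iterate_zero_apply]
      refine Prod.ext_iff.2 ⟨?_, ?_⟩
      · simp [hφ₀]
      · simp only [pow_zero, one_mul]
        push_cast
        simpa using hθeq
    | succ n ih =>
      obtain ⟨k, l, h⟩ := ih
      obtain ⟨k', l', h'⟩ := step_all a b c lam hb hc0 hca hb2 hlam Bs hcont hBs1 hBs2
        (lam ^ n * ξ₀) (by positivity) k l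
      refine ⟨k', l', ?_⟩
      rw [Function.iterate_succ_apply', h, h',
        show lam * (lam ^ n * ξ₀) = lam ^ (n + 1) * ξ₀ from by rw [pow_succ]; ring]
  intro n
  obtain ⟨k, l, hkl⟩ := key n
  have hX : 0 < lam ^ n * ξ₀ := by positivity
  set X := lam ^ n * ξ₀
  have htneg : -(b * (1 + X ^ 2)) / (2 * c * X) < 0 := by
    apply div_neg_of_neg_of_pos
    · have : 0 < b * (1 + X ^ 2) := by positivity
      linarith
    · positivity
  have harcneg : Real.arctan (-(b * (1 + X ^ 2)) / (2 * c * X)) < 0 := by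
    have := Real.arctan_strictMono htneg
    simpa using this
  refine ⟨Real.arctan (-(b * (1 + X ^ 2)) / (2 * c * X)) + Real.pi,
    ⟨?_, ?_⟩, ?_, k, l, hkl⟩
  · have := Real.neg_pi_div_two_lt_arctan (-(b * (1 + X ^ 2)) / (2 * c * X))
    linarith
  · linarith
  · rw [Real.tan_add_pi, Real.tan_arctan]
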